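/- Define φ(x) = ∫₀ˣ exp(−t²/2) dt. For all x > 0, (exp(−x²/2)/φ(x)) · ( x² − 1 + x·exp(−x²/2)/φ(x) ) ≤ 2x/3. -/

import Mathlib

open Real intervalIntegral

lemma cont_f : Continuous (fun t : ℝ => Real.exp (-t ^ 2 / 2)) := by
  continuity

lemma phi_deriv (y : ℝ) :
    HasDerivAt (fun u : ℝ => ∫ t in (0:ℝ)..u, Real.exp (-t ^ 2 / 2))
      (Real.exp (-y ^ 2 / 2)) y :=
  intervalIntegral.integral_hasDerivAt_right (cont_f.intervalIntegrable _ _)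
    (cont_f.stronglyMeasurableAtFilter _ _) cont_f.continuousAt

lemma phi_lower (x : ℝ) (hx : 0 ≤ x) :
    (x + x ^ 3 / 3) * Real.exp (-x ^ 2 / 2) ≤ ∫ t in (0:ℝ)..x, Real.exp (-t ^ 2 / 2) := by
  set g : ℝ → ℝ := fun y => (∫ t in (0:ℝ)..y, Real.exp (-t ^ 2 / 2)) -
    (y + y ^ 3 / 3) * Real.exp (-y ^ 2 / 2) with hg
  have hderiv : ∀ y : ℝ, HasDerivAt g (y ^ 4 / 3 * Real.exp (-y ^ 2 / 2)) y := by
    intro y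
    have h1 := phi_deriv y
    have h2 : HasDerivAt (fun y : ℝ => (y + y ^ 3 / 3) * Real.exp (-y ^ 2 / 2))
        ((1 + y ^ 2) * Real.exp (-y ^ 2 / 2) + (y + y ^ 3 / 3) * (Real.exp (-y ^ 2 / 2) * (-y))) y := by
      have ha : HasDerivAt (fun y : ℝ => y + y ^ 3 / 3) (1 + y ^ 2) y := by
        have := ((hasDerivAt_id y).add (((hasDerivAt_pow 3 y)).div_const 3))
        exact this.congr_deriv (by ring)
      have hb : HasDerivAt (fun y : ℝ => Real.exp (-y ^ 2 / 2)) (Real.exp (-y ^ 2 / 2) * (-y)) y := by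
        have hc : HasDerivAt (fun y : ℝ => -y ^ 2 / 2) (-y) y := by
          have := ((hasDerivAt_pow 2 y).neg).div_const 2
          exact this.congr_deriv (by ring)
        exact (Real.hasDerivAt_exp _).comp y hc
      exact ha.mul hb
    have := h1.sub h2
    exact this.congr_deriv (by ring)
  have hmono : MonotoneOn g (Set.Icc 0 x) := by
    apply monotoneOn_of_deriv_nonneg (convex_Icc 0 x)
    · exact fun y _ => (hderiv y).continuousAt.continuousWithinAt
    · intro y hy
      exact (hderiv y).differentiableAt.differentiableWithinAt
    · intro y hy
      rw [(hderiv y).deriv]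
      positivity
  have h0 : g 0 = 0 := by simp [hg]
  have := hmono (Set.left_mem_Icc.mpr hx) (Set.mem_Icc.mpr ⟨hx, le_refl x⟩) hx
  rw [h0] at this
  simpa [hg, sub_nonneg] using this

lemma phi_pos (x : ℝ) (hx : 0 < x) :
    0 < ∫ t in (0:ℝ)..x, Real.exp (-t ^ 2 / 2) := by
  apply intervalIntegral.intervalIntegral_pos_of_pos_on (cont_f.intervalIntegrable _ _)
  · intro t _; positivity
  · exact hx

theorem central_analytic_ineq (x : ℝ) (hx : 0 < x) :
    Real.exp (-x ^ 2 / 2) / (∫ t in (0 : ℝ)..x, Real.exp (-t ^ 2 / 2)) *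
        (x ^ 2 - 1 +
          x * Real.exp (-x ^ 2 / 2) / (∫ t in (0 : ℝ)..x, Real.exp (-t ^ 2 / 2))) ≤
      2 * x / 3 := by
  set φ := ∫ t in (0:ℝ)..x, Real.exp (-t ^ 2 / 2) with hφ
  have hφpos : 0 < φ := phi_pos x hx
  set r := Real.exp (-x ^ 2 / 2) / φ with hr
  have hrpos : 0 < r := div_pos (Real.exp_pos _) hφpos
  have hlow : (x + x ^ 3 / 3) * Real.exp (-x ^ 2 / 2) ≤ φ := phi_lower x hx.le
  have hR : r ≤ 3 / (x * (x ^ 2 + 3)) := by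
    rw [hr, div_le_div_iff₀ hφpos (by positivity)]
    calc Real.exp (-x ^ 2 / 2) * (x * (x ^ 2 + 3))
        = 3 * ((x + x ^ 3 / 3) * Real.exp (-x ^ 2 / 2)) := by ring
      _ ≤ 3 * φ := by linarith
  have hxr : x * Real.exp (-x ^ 2 / 2) / φ = x * r := by rw [hr]; ring
  rw [hxr]
  by_cases hcase : x ^ 2 - 1 + x * r ≤ 0
  · have : r * (x ^ 2 - 1 + x * r) ≤ 0 := mul_nonpos_of_nonneg_of_nonpos hrpos.le hcase
    linarith [hx.le]
  · push_neg at hcase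
    set R := 3 / (x * (x ^ 2 + 3)) with hRdef
    have hRpos : 0 < R := by positivity
    have h1 : r * (x ^ 2 - 1 + x * r) ≤ R * (x ^ 2 - 1 + x * r) :=
      mul_le_mul_of_nonneg_right hR hcase.le
    have h2 : R * (x ^ 2 - 1 + x * r) ≤ R * (x ^ 2 - 1 + x * R) := by
      apply mul_le_mul_of_nonneg_left _ hRpos.le
      have := mul_le_mul_of_nonneg_left hR hx.le
      linarith
    have h3 : R * (x ^ 2 - 1 + x * R) ≤ 2 * x / 3 := by
      rw [hRdef, ← sub_nonneg]
      have hpos : (0:ℝ) < x * (x ^ 2 + 3) := by positivity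
      field_simp
      nlinarith [sq_nonneg x, pow_pos hx 4, sq_nonneg (x ^ 2)]
    linarith
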